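/- arXiv:1309.6731 — 3 statements merged into one kernel-verified Lean document; each statement's English description precedes it below -/
import Mathlib

section
/- Let V be an n-dimensional vector space over GF(q) with n ≥ 2, let U be an (n−2)-dimensional subspace of V, and let u, v be two distinct 1-dimensional subspaces of V with u ≰ U and v ≰ U. Then the family of all (n−1)-dimensional subspaces of V containing U fails to separate u and v if and only if U ∩ ⟨u, v⟩ is a 1-dimensional subspace different from both u and v. -/
open Module Submodule


/-- For an `(n-2)`-dimensional subspace `U` and distinct `1`-dimensional subspaces
`u, v` not contained in `U`, the hyperplanes through `U` fail to separate `u` and `v`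
iff `U ⊓ ⟨u,v⟩` is a `1`-dimensional subspace different from both `u` and `v`. -/
theorem stmt_3 (q n : ℕ) (hq : ∃ (p k : ℕ), p.Prime ∧ 0 < k ∧ q = p ^ k) (hn : 2 ≤ n)
    (F : Type*) [Field F] [Fintype F] (hF : Fintype.card F = q)
    (V : Type*) [AddCommGroup V] [Module F V] (hV : Module.finrank F V = n)
    (U : Submodule F V) (hU : Module.finrank F U = n - 2)
    (u v : Submodule F V) (hu : Module.finrank F u = 1) (hv : Module.finrank F v = 1)
    (huv : u ≠ v) (huU : ¬ u ≤ U) (hvU : ¬ v ≤ U) :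
    (∀ W : Submodule F V, Module.finrank F W = n - 1 → U ≤ W →
        ((u ≤ W ∧ v ≤ W) ∨ (¬ u ≤ W ∧ ¬ v ≤ W))) ↔
      (Module.finrank F (U ⊓ (u ⊔ v) : Submodule F V) = 1 ∧
        U ⊓ (u ⊔ v) ≠ u ∧ U ⊓ (u ⊔ v) ≠ v) := by
  have hfinV : FiniteDimensional F V := Module.finite_of_finrank_pos (by omega)
  set S := u ⊔ v with hSdef
  -- distinct lines have trivial intersection
  have line_inf : ∀ x y : Submodule F V, finrank F x = 1 → finrank F y = 1 → x ≠ y →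
      x ⊓ y = ⊥ := by
    intro x y hx hy hxy
    by_contra h
    have h1 : 0 < finrank F (x ⊓ y : Submodule F V) := by
      exact Nat.pos_of_ne_zero fun hz => h (Submodule.finrank_eq_zero.mp hz)
    have h2 : finrank F (x ⊓ y : Submodule F V) ≤ 1 := hx ▸ Submodule.finrank_mono inf_le_left
    have h3 : x ⊓ y = x := Submodule.eq_of_le_of_finrank_eq inf_le_left (by omega)
    have h4 : x ≤ y := h3 ▸ inf_le_right
    exact hxy (Submodule.eq_of_le_of_finrank_eq h4 (by rw [hx, hy]))
  have hS2 : finrank F S = 2 := by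
    have := Submodule.finrank_sup_add_finrank_inf_eq u v
    rw [line_inf u v hu hv huv, finrank_bot F V, hu, hv, ← hSdef] at this
    omega
  -- the ≠ conditions are automatic
  have hne_u : U ⊓ S ≠ u := fun h => huU (h ▸ inf_le_left)
  have hne_v : U ⊓ S ≠ v := fun h => hvU (h ▸ inf_le_left)
  have hUS_le : finrank F (U ⊓ S : Submodule F V) ≤ 1 := by
    have h2 : finrank F (U ⊓ S : Submodule F V) ≤ 2 := hS2 ▸ Submodule.finrank_mono inf_le_right
    by_contra h
    have : U ⊓ S = S := Submodule.eq_of_le_of_finrank_eq inf_le_right (by omega)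
    exact huU (le_trans (le_trans le_sup_left this.symm.le) inf_le_left)
  constructor
  · intro H
    refine ⟨?_, hne_u, hne_v⟩
    by_contra h
    have hbot : U ⊓ S = ⊥ := by
      rw [← Submodule.finrank_eq_zero (R := F)]; omega
    have hUu : U ⊓ u = ⊥ := by
      have hle : U ⊓ u ≤ U ⊓ S := inf_le_inf_left U le_sup_left
      exact le_bot_iff.mp (hbot ▸ hle)
    have hW : finrank F (U ⊔ u : Submodule F V) = n - 1 := by
      have := Submodule.finrank_sup_add_finrank_inf_eq U u
      rw [hUu, finrank_bot, hU, hu] at this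
      omega
    rcases H (U ⊔ u) hW le_sup_left with ⟨h1, h2⟩ | ⟨h1, h2⟩
    · have hSle : S ≤ U ⊔ u := sup_le h1 h2
      have hUS : finrank F (U ⊔ S : Submodule F V) = n := by
        have := Submodule.finrank_sup_add_finrank_inf_eq U S
        rw [hbot, finrank_bot, hU, hS2] at this
        omega
      have : (n : ℕ) ≤ n - 1 := by
        calc n = finrank F (U ⊔ S : Submodule F V) := hUS.symm
        _ ≤ finrank F (U ⊔ u : Submodule F V) :=
            Submodule.finrank_mono (sup_le le_sup_left hSle)
        _ = n - 1 := hW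
      omega
    · exact h1 le_sup_right
  · rintro ⟨h1, -, -⟩
    intro W hW hUW
    have hwW : U ⊓ S ≤ W := le_trans inf_le_left hUW
    have key : ∀ x : Submodule F V, finrank F x = 1 → x ≤ S → U ⊓ S ≠ x → x ≤ W →
        S ≤ W := by
      intro x hx hxS hne hxW
      have hinf : (U ⊓ S) ⊓ x = ⊥ := by
        by_contra h
        have h0 : 0 < finrank F ((U ⊓ S) ⊓ x : Submodule F V) :=
          Nat.pos_of_ne_zero fun hz => h (Submodule.finrank_eq_zero.mp hz)
        have hle2 : finrank F ((U ⊓ S) ⊓ x : Submodule F V) ≤ 1 :=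
          hx ▸ Submodule.finrank_mono inf_le_right
        have heq : (U ⊓ S) ⊓ x = x :=
          Submodule.eq_of_le_of_finrank_eq inf_le_right (by omega)
        have hxle : x ≤ U ⊓ S := heq ▸ inf_le_left
        exact hne (Submodule.eq_of_le_of_finrank_eq hxle (by rw [hx, h1])).symm
      have hsum := Submodule.finrank_sup_add_finrank_inf_eq (U ⊓ S) x
      rw [hinf, finrank_bot F V, hx, h1] at hsum
      have heqS : (U ⊓ S) ⊔ x = S :=
        Submodule.eq_of_le_of_finrank_eq (sup_le inf_le_right hxS) (by omega)
      exact heqS ▸ sup_le hwW hxW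
    by_cases hu' : u ≤ W
    · exact Or.inl ⟨hu', le_trans le_sup_right (key u hu le_sup_left hne_u hu')⟩
    · by_cases hv' : v ≤ W
      · exact absurd (le_trans le_sup_left (key v hv le_sup_right hne_v hv')) hu'
      · exact Or.inr ⟨hu', hv'⟩
end

section
/- Let V be an n-dimensional vector space over GF(q) with n ≥ 4, and let u, v be two distinct 1-dimensional subspaces of V. Then the number of (n−2)-dimensional subspaces U of V such that the family of all (n−1)-dimensional subspaces containing U does not separate u and v equals (q−1)·[n−1 choose n−3]_q − (q−2)·[n−2 choose n−4]_q, where [a choose b]_q denotes the Gaussian binomial coefficient. -/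
open Module Submodule

section Helpers

variable {K M M' : Type*} [Field K] [AddCommGroup M] [Module K M]
  [AddCommGroup M'] [Module K M']



  [AddCommGroup M'] [Module K M']

/-- cardinality of fibers constant → card = card base * c -/
lemma my_card_fiber_const {α β : Type*} [Finite α] [Finite β] (f : α → β) (c : ℕ)
    (h : ∀ b, Nat.card {a // f a = b} = c) : Nat.card α = Nat.card β * c := by
  classical
  letI := Fintype.ofFinite α; letI := Fintype.ofFinite β
  rw [Nat.card_eq_fintype_card, Nat.card_eq_fintype_card,
    ← Fintype.card_congr (Equiv.sigmaFiberEquiv f), Fintype.card_sigma]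
  have : ∀ b : β, Fintype.card {a // f a = b} = c := by
    intro b; rw [← Nat.card_eq_fintype_card]; exact h b
  simp [this, Finset.sum_const, Finset.card_univ, mul_comm]

lemma my_card_subspaces_congr (e : M ≃ₗ[K] M') (b : ℕ) :
    Nat.card {W : Submodule K M // finrank K W = b} =
      Nat.card {W' : Submodule K M' // finrank K W' = b} := by
  refine Nat.card_congr ((Submodule.orderIsoMapComap e).toEquiv.subtypeEquiv fun W => ?_)
  have : ((Submodule.orderIsoMapComap e).toEquiv W : Submodule K M') = W.map (e : M →ₗ[K] M') := rfl
  rw [this, LinearEquiv.finrank_map_eq e W]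

lemma my_card_subspaces_eq_gaussBinom [FiniteDimensional K M] {a : ℕ}
    (hM : finrank K M = a) (b : ℕ) :
    Nat.card {W : Submodule K M // finrank K W = b} =
      Nat.card {W : Submodule K (Fin a → K) // finrank K W = b} :=
  my_card_subspaces_congr ((Module.finBasisOfFinrankEq K M hM).equivFun) b


lemma my_card_subtype_ne {α : Type*} [Fintype α] (a : α) :
    Nat.card {x : α // x ≠ a} = Fintype.card α - 1 := by
  classical
  have := Fintype.card_subtype_compl (fun x : α => x = a)
  rw [Nat.card_eq_fintype_card]
  simpa [Fintype.card_subtype_eq] using this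


lemma my_card_lines_mul [Fintype K] [FiniteDimensional K M] :
    Nat.card {m : Submodule K M // Module.finrank K m = 1} * (Fintype.card K - 1) =
      Fintype.card K ^ Module.finrank K M - 1 := by
  classical
  haveI : Fintype M := Module.fintypeOfFintype (Module.finBasis K M)
  have hf : ∀ (m : {m : Submodule K M // Module.finrank K m = 1}),
      Nat.card {x : {y : M // y ≠ 0} // (⟨Submodule.span K {x.1},
        finrank_span_singleton x.2⟩ : {m : Submodule K M // Module.finrank K m = 1}) = m} =
      Fintype.card K - 1 := by
    intro m
    have e : {x : {y : M // y ≠ 0} // (⟨Submodule.span K {x.1},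
        finrank_span_singleton x.2⟩ : {m : Submodule K M // Module.finrank K m = 1}) = m} ≃
        {z : m.1 // z ≠ 0} := by
      refine ⟨fun x => ⟨⟨x.1.1, ?_⟩, ?_⟩, fun z => ⟨⟨z.1.1, ?_⟩, ?_⟩, fun x => ?_, fun z => ?_⟩
      · have : Submodule.span K {x.1.1} = m.1 := congrArg Subtype.val x.2
        rw [← this]; exact Submodule.mem_span_singleton_self _
      · intro h; exact x.1.2 (by simpa using congrArg Subtype.val h)
      · intro h; exact z.2 (Subtype.ext h)
      · apply Subtype.ext
        have hz : z.1.1 ≠ 0 := fun h => z.2 (Subtype.ext h)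
        have hle : Submodule.span K {z.1.1} ≤ m.1 :=
          (Submodule.span_singleton_le_iff_mem _ _).2 z.1.2
        exact Submodule.eq_of_le_of_finrank_eq hle
          (by rw [finrank_span_singleton hz, m.2])
      · apply Subtype.ext; apply Subtype.ext; rfl
      · apply Subtype.ext; rfl
    rw [Nat.card_congr e, my_card_subtype_ne]
    congr 1
    rw [card_eq_pow_finrank (K := K) (V := m.1), m.2, pow_one]
  have key := my_card_fiber_const (fun x : {y : M // y ≠ 0} =>
    (⟨Submodule.span K {x.1}, finrank_span_singleton x.2⟩ :
      {m : Submodule K M // Module.finrank K m = 1})) (Fintype.card K - 1) hf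
  rw [← key, my_card_subtype_ne, card_eq_pow_finrank (K := K) (V := M)]


lemma my_finrank_comap_mkQ [FiniteDimensional K M] (p : Submodule K M)
    (W' : Submodule K (M ⧸ p)) :
    finrank K (W'.comap p.mkQ) = finrank K W' + finrank K p := by
  set U := W'.comap p.mkQ with hU
  have hpU : p ≤ U := by
    intro x hx
    simp [hU, Submodule.mem_comap, (Submodule.Quotient.mk_eq_zero p).2 hx]
  let f : U →ₗ[K] (M ⧸ p) := p.mkQ.comp U.subtype
  have hker : LinearMap.ker f = p.comap U.subtype := by
    ext x; simp [f, Submodule.Quotient.mk_eq_zero]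
  have hrange : LinearMap.range f = W' := by
    have : LinearMap.range f = U.map p.mkQ := by
      rw [LinearMap.range_comp, Submodule.range_subtype]
    rw [this, hU, Submodule.map_comap_eq_of_surjective (Submodule.mkQ_surjective p)]
  have h1 : finrank K (LinearMap.range f) + finrank K (LinearMap.ker f) = finrank K U :=
    LinearMap.finrank_range_add_finrank_ker f
  have h2 : finrank K (p.comap U.subtype) = finrank K p := by
    have := Submodule.finrank_map_subtype_eq U (p.comap U.subtype)
    rw [Submodule.map_comap_subtype, inf_eq_right.2 hpU] at this
    -- this : finrank p = finrank (comap ...)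
    omega
  rw [hker, hrange, h2] at h1
  omega

/-- counting subspaces of dim b containing p -/
lemma my_card_subspaces_above [FiniteDimensional K M] (p : Submodule K M) (b : ℕ)
    (hb : finrank K p ≤ b) :
    Nat.card {W : Submodule K M // p ≤ W ∧ finrank K W = b} =
      Nat.card {W' : Submodule K (M ⧸ p) // finrank K W' = b - finrank K p} := by
  refine (Nat.card_congr ?_).symm
  refine ⟨fun W' => ⟨(W'.1).comap p.mkQ, ?_, ?_⟩, fun W => ⟨(W.1).map p.mkQ, ?_⟩,
    fun W' => ?_, fun W => ?_⟩
  · intro x hx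
    simp [Submodule.mem_comap, (Submodule.Quotient.mk_eq_zero p).2 hx]
  · rw [my_finrank_comap_mkQ, W'.2]; omega
  · have hcm : ((W.1.map p.mkQ).comap p.mkQ) = W.1 := by
      rw [Submodule.comap_map_eq, Submodule.ker_mkQ, sup_eq_left.2 W.2.1]
    have := my_finrank_comap_mkQ p (W.1.map p.mkQ)
    rw [hcm, W.2.2] at this
    omega
  · apply Subtype.ext
    exact Submodule.map_comap_eq_of_surjective (Submodule.mkQ_surjective p) _
  · apply Subtype.ext
    simp only
    rw [Submodule.comap_map_eq, Submodule.ker_mkQ, sup_eq_left.2 W.2.1]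

end Helpers

section Geom

variable {F V : Type*} [Field F] [AddCommGroup V] [Module F V] [FiniteDimensional F V]


lemma my_line_inf (w U : Submodule F V) (hw : Module.finrank F w = 1) (hwU : ¬ w ≤ U) :
    w ⊓ U = ⊥ := by
  by_contra h
  obtain ⟨x, hx, hx0⟩ := (Submodule.ne_bot_iff _).1 h
  have hle : Submodule.span F {x} ≤ w := (Submodule.span_singleton_le_iff_mem _ _).2 hx.1
  have : Submodule.span F {x} = w :=
    Submodule.eq_of_le_of_finrank_eq hle (by rw [finrank_span_singleton hx0, hw])
  exact hwU (this ▸ (Submodule.span_singleton_le_iff_mem _ _).2 hx.2)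

lemma my_finrank_line_sup (w U : Submodule F V) (hw : Module.finrank F w = 1)
    (hwU : ¬ w ≤ U) : Module.finrank F (w ⊔ U : Submodule F V) = Module.finrank F U + 1 := by
  have h := Submodule.finrank_sup_add_finrank_inf_eq w U
  rw [my_line_inf w U hw hwU, finrank_bot, hw] at h
  omega

lemma my_sep_helper {n : ℕ} (hn : 4 ≤ n) (hV : Module.finrank F V = n)
    (a b U : Submodule F V) (hb : Module.finrank F b = 1)
    (hU : Module.finrank F U = n - 2) (haU : a ≤ U) (hbU : ¬ b ≤ U)
    (hcond : ∀ W : Submodule F V, Module.finrank F W = n - 1 → U ≤ W → (a ≤ W ↔ b ≤ W)) :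
    False := by
  -- W0 := b ⊔ U has dimension n-1 < n, pick x outside
  have hW0 : Module.finrank F (b ⊔ U : Submodule F V) = n - 1 := by
    rw [my_finrank_line_sup b U hb hbU, hU]; omega
  have hW0ne : (b ⊔ U : Submodule F V) ≠ ⊤ := by
    intro h; rw [h, finrank_top, hV] at hW0; omega
  obtain ⟨x, hx⟩ : ∃ x, x ∉ (b ⊔ U : Submodule F V) := by
    by_contra h; push_neg at h
    exact hW0ne (Submodule.eq_top_iff'.2 h)
  have hx0 : x ≠ 0 := fun h => hx (h ▸ Submodule.zero_mem _)
  have hxU : x ∉ U := fun h => hx (le_sup_right (a := b) h)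
  have hsx : ¬ Submodule.span F {x} ≤ U := fun h =>
    hxU (h (Submodule.mem_span_singleton_self x))
  set W : Submodule F V := Submodule.span F {x} ⊔ U with hWdef
  have hWrank : Module.finrank F W = n - 1 := by
    rw [hWdef, my_finrank_line_sup _ U (finrank_span_singleton hx0) hsx, hU]; omega
  have haW : a ≤ W := haU.trans le_sup_right
  have hbW : b ≤ W := (hcond W hWrank le_sup_right).1 haW
  -- derive contradiction from b ≤ W
  obtain ⟨y, hy, hy0⟩ := (Submodule.ne_bot_iff b).1 (by
    intro h; rw [h, finrank_bot] at hb; omega)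
  have hyW : y ∈ W := hbW hy
  rw [hWdef] at hyW
  obtain ⟨z, hz, p, hp, hzp⟩ := Submodule.mem_sup.1 hyW
  obtain ⟨c, rfl⟩ := Submodule.mem_span_singleton.1 hz
  by_cases hc : c = 0
  · -- y ∈ U, so b ≤ U
    have hyU : y ∈ U := by rw [← hzp, hc, zero_smul, zero_add]; exact hp
    have hby : Submodule.span F {y} ≤ b := (Submodule.span_singleton_le_iff_mem _ _).2 hy
    have : Submodule.span F {y} = b :=
      Submodule.eq_of_le_of_finrank_eq hby (by rw [finrank_span_singleton hy0, hb])
    exact hbU (this ▸ (Submodule.span_singleton_le_iff_mem _ _).2 hyU)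
  · -- x ∈ b ⊔ U
    have : x = c⁻¹ • (y - p) := by
      rw [← hzp]; rw [add_sub_cancel_right, smul_smul, inv_mul_cancel₀ hc, one_smul]
    have hxin : x ∈ (b ⊔ U : Submodule F V) := by
      rw [this]
      exact Submodule.smul_mem _ _ (Submodule.sub_mem _
        ((le_sup_left : b ≤ b ⊔ U) hy) ((le_sup_right : U ≤ b ⊔ U) hp))
    exact hx hxin

lemma my_geom_iff {n : ℕ} (hn : 4 ≤ n) (hV : Module.finrank F V = n)
    (u v : Submodule F V) (hu : Module.finrank F u = 1) (hv : Module.finrank F v = 1)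
    (huv : u ≠ v) (U : Submodule F V) (hU : Module.finrank F U = n - 2) :
    (∀ W : Submodule F V, Module.finrank F W = n - 1 → U ≤ W →
        ((u ≤ W ∧ v ≤ W) ∨ (¬ u ≤ W ∧ ¬ v ≤ W))) ↔
      (u ⊔ v ≤ U ∨ (Module.finrank F (U ⊓ (u ⊔ v) : Submodule F V) = 1 ∧
        U ⊓ (u ⊔ v) ≠ u ∧ U ⊓ (u ⊔ v) ≠ v)) := by
  set L : Submodule F V := u ⊔ v with hLdef
  have hunev : ¬ u ≤ v := fun h => huv (Submodule.eq_of_le_of_finrank_eq h (hu.trans hv.symm))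
  have hL2 : Module.finrank F L = 2 := by
    rw [hLdef, my_finrank_line_sup u v hu hunev, hv]
  constructor
  · intro hcond
    have hcond' : ∀ W : Submodule F V, Module.finrank F W = n - 1 → U ≤ W → (u ≤ W ↔ v ≤ W) := by
      intro W h1 h2; rcases hcond W h1 h2 with ⟨h3, h4⟩ | ⟨h3, h4⟩ <;> tauto
    by_cases hu' : u ≤ U <;> by_cases hv' : v ≤ U
    · exact Or.inl (sup_le hu' hv')
    · exact absurd (my_sep_helper hn hV u v U hv hU hu' hv' hcond') id
    · exact absurd (my_sep_helper hn hV v u U hu hU hv' hu'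
        (fun W h1 h2 => (hcond' W h1 h2).symm)) id
    · -- both not ≤ U
      have h1 : Module.finrank F (u ⊔ U : Submodule F V) = n - 1 := by
        rw [my_finrank_line_sup u U hu hu', hU]; omega
      have h2 : Module.finrank F (v ⊔ U : Submodule F V) = n - 1 := by
        rw [my_finrank_line_sup v U hv hv', hU]; omega
      have hvle : v ≤ u ⊔ U := (hcond' _ h1 le_sup_right).1 le_sup_left
      have hule : u ≤ v ⊔ U := (hcond' _ h2 le_sup_right).2 le_sup_left
      have hsupeq : U ⊔ L = u ⊔ U := by
        apply le_antisymm
        · exact sup_le le_sup_right (sup_le le_sup_left hvle)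
        · exact sup_le (le_sup_left.trans le_sup_right) le_sup_left
      have hsum := Submodule.finrank_sup_add_finrank_inf_eq U L
      rw [hsupeq, h1, hU, hL2] at hsum
      have hinfrank : Module.finrank F (U ⊓ L : Submodule F V) = 1 := by omega
      refine Or.inr ⟨hinfrank, ?_, ?_⟩
      · intro h; exact hu' (h ▸ inf_le_left)
      · intro h; exact hv' (h ▸ inf_le_left)
  · intro h W hW hUW
    rcases h with h | ⟨h1, h2, h3⟩
    · exact Or.inl ⟨(le_sup_left.trans h).trans hUW, (le_sup_right.trans h).trans hUW⟩
    · have hu' : ¬ u ≤ U := by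
        intro h'
        have : u ≤ U ⊓ L := le_inf h' le_sup_left
        exact h2 (Submodule.eq_of_le_of_finrank_eq this (hu.trans h1.symm)).symm
      have hv' : ¬ v ≤ U := by
        intro h'
        have : v ≤ U ⊓ L := le_inf h' le_sup_right
        exact h3 (Submodule.eq_of_le_of_finrank_eq this (hv.trans h1.symm)).symm
      have hkeyu : u ⊔ (U ⊓ L) = L := by
        have hne : ¬ u ≤ U ⊓ L := fun h' =>
          h2 (Submodule.eq_of_le_of_finrank_eq h' (hu.trans h1.symm)).symm
        refine Submodule.eq_of_le_of_finrank_eq (sup_le le_sup_left inf_le_right) ?_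
        rw [my_finrank_line_sup u (U ⊓ L) hu hne, h1, hL2]
      have hkeyv : v ⊔ (U ⊓ L) = L := by
        have hne : ¬ v ≤ U ⊓ L := fun h' =>
          h3 (Submodule.eq_of_le_of_finrank_eq h' (hv.trans h1.symm)).symm
        refine Submodule.eq_of_le_of_finrank_eq (sup_le le_sup_right inf_le_right) ?_
        rw [my_finrank_line_sup v (U ⊓ L) hv hne, h1, hL2]
      have hvle : v ≤ u ⊔ U := by
        calc v ≤ L := le_sup_right
        _ = u ⊔ (U ⊓ L) := hkeyu.symm
        _ ≤ u ⊔ U := sup_le_sup_left inf_le_left u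
      have hule : u ≤ v ⊔ U := by
        calc u ≤ L := le_sup_left
        _ = v ⊔ (U ⊓ L) := hkeyv.symm
        _ ≤ v ⊔ U := sup_le_sup_left inf_le_left v
      by_cases hu'' : u ≤ W
      · exact Or.inl ⟨hu'', hvle.trans (sup_le hu'' hUW)⟩
      · exact Or.inr ⟨hu'', fun hv'' => hu'' (hule.trans (sup_le hv'' hUW))⟩


lemma my_count_fiber [Finite (Submodule F V)] {n : ℕ}
    (L m : Submodule F V) (hL2 : Module.finrank F L = 2)
    (hm1 : Module.finrank F m = 1) (hmL : m ≤ L) :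
    Nat.card {U : Submodule F V // Module.finrank F U = n - 2 ∧ U ⊓ L = m} +
      Nat.card {U : Submodule F V // Module.finrank F U = n - 2 ∧ L ≤ U} =
      Nat.card {U : Submodule F V // Module.finrank F U = n - 2 ∧ m ≤ U} := by
  classical
  set S := {U : Submodule F V // Module.finrank F U = n - 2 ∧ m ≤ U}
  have e0 : {x : S // x.1 ⊓ L = m} ⊕ {x : S // ¬ (x.1 ⊓ L = m)} ≃ S :=
    Equiv.sumCompl _
  have e1 : {x : S // x.1 ⊓ L = m} ≃
      {U : Submodule F V // Module.finrank F U = n - 2 ∧ U ⊓ L = m} := by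
    refine (Equiv.subtypeSubtypeEquivSubtypeInter
      (fun U : Submodule F V => Module.finrank F U = n - 2 ∧ m ≤ U)
      (fun U => U ⊓ L = m)).trans
      (Equiv.subtypeEquivRight fun U => ?_)
    constructor
    · rintro ⟨⟨h1, h2⟩, h3⟩; exact ⟨h1, h3⟩
    · rintro ⟨h1, h3⟩; exact ⟨⟨h1, h3 ▸ inf_le_left⟩, h3⟩
  have e2 : {x : S // ¬ (x.1 ⊓ L = m)} ≃
      {U : Submodule F V // Module.finrank F U = n - 2 ∧ L ≤ U} := by
    refine (Equiv.subtypeSubtypeEquivSubtypeInter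
      (fun U : Submodule F V => Module.finrank F U = n - 2 ∧ m ≤ U)
      (fun U => ¬ (U ⊓ L = m))).trans
      (Equiv.subtypeEquivRight fun U => ?_)
    constructor
    · rintro ⟨⟨h1, h2⟩, h3⟩
      refine ⟨h1, ?_⟩
      have hle : m ≤ U ⊓ L := le_inf h2 hmL
      have hr1 : 1 ≤ Module.finrank F (U ⊓ L : Submodule F V) := by
        have := Submodule.finrank_mono hle; omega
      have hr2 : Module.finrank F (U ⊓ L : Submodule F V) ≤ 2 := by
        have := Submodule.finrank_mono (inf_le_right : U ⊓ L ≤ L); omega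
      rcases (by omega : Module.finrank F (U ⊓ L : Submodule F V) = 1 ∨
          Module.finrank F (U ⊓ L : Submodule F V) = 2) with h | h
      · exact absurd (Submodule.eq_of_le_of_finrank_eq hle (by omega)).symm h3
      · have : U ⊓ L = L := Submodule.eq_of_le_of_finrank_eq inf_le_right (by omega)
        exact this ▸ inf_le_left
    · rintro ⟨h1, h2⟩
      have hUL : U ⊓ L = L := inf_eq_right.2 h2
      refine ⟨⟨h1, hmL.trans h2⟩, fun h => ?_⟩
      rw [hUL] at h
      rw [h] at hL2
      omega
  rw [← Nat.card_congr e0, Nat.card_sum, Nat.card_congr e1, Nat.card_congr e2]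

end Geom
/-- The Gaussian binomial coefficient `[a choose b]_q`, realized as the number of
`b`-dimensional subspaces of an `a`-dimensional vector space over the field `F`
(with `|F| = q`). -/
noncomputable def gaussBinom (F : Type*) [Field F] (a b : ℕ) : ℕ :=
  Nat.card {W : Submodule F (Fin a → F) // Module.finrank F W = b}

/-- For distinct `1`-dimensional subspaces `u, v` of an `n`-dimensional space (`n ≥ 4`)
over `GF(q)`, the number of `(n-2)`-dimensional subspaces `U` such that the hyperplanes
through `U` do not separate `u` and `v` is
`(q-1)·[n-1 choose n-3]_q − (q-2)·[n-2 choose n-4]_q`. -/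
theorem stmt_4 (q n : ℕ) (hq : ∃ (p k : ℕ), p.Prime ∧ 0 < k ∧ q = p ^ k) (hn : 4 ≤ n)
    (F : Type*) [Field F] [Fintype F] (hF : Fintype.card F = q)
    (V : Type*) [AddCommGroup V] [Module F V] (hV : Module.finrank F V = n)
    (u v : Submodule F V) (hu : Module.finrank F u = 1) (hv : Module.finrank F v = 1)
    (huv : u ≠ v) :
    (Nat.card {U : Submodule F V // Module.finrank F U = n - 2 ∧
        ∀ W : Submodule F V, Module.finrank F W = n - 1 → U ≤ W →
          ((u ≤ W ∧ v ≤ W) ∨ (¬ u ≤ W ∧ ¬ v ≤ W))} : ℤ) =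
      ((q : ℤ) - 1) * (gaussBinom F (n - 1) (n - 3) : ℤ)
        - ((q : ℤ) - 2) * (gaussBinom F (n - 2) (n - 4) : ℤ) := by
  classical
  haveI : FiniteDimensional F V := FiniteDimensional.of_finrank_pos (by rw [hV]; omega)
  haveI : Fintype V := Module.fintypeOfFintype (Module.finBasis F V)
  haveI : Finite (Submodule F V) :=
    Finite.of_injective (fun p => (p : Set V)) SetLike.coe_injective
  have hq2 : 2 ≤ q := by
    obtain ⟨p, k, hp, hk, rfl⟩ := hq
    calc 2 ≤ p := hp.two_le
    _ = p ^ 1 := (pow_one p).symm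
    _ ≤ p ^ k := Nat.pow_le_pow_right hp.pos hk
  set L : Submodule F V := u ⊔ v with hLdef
  have hunev : ¬ u ≤ v := fun h => huv (Submodule.eq_of_le_of_finrank_eq h (hu.trans hv.symm))
  have hL2 : Module.finrank F L = 2 := by
    rw [hLdef, my_finrank_line_sup u v hu hunev, hv]
  set g1 : ℕ := gaussBinom F (n - 1) (n - 3) with hg1def
  set g2 : ℕ := gaussBinom F (n - 2) (n - 4) with hg2def
  -- counting subspaces of dim n-2 above a line
  have cardAbove : ∀ m : Submodule F V, Module.finrank F m = 1 →
      Nat.card {U : Submodule F V // Module.finrank F U = n - 2 ∧ m ≤ U} = g1 := by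
    intro m hm
    rw [Nat.card_congr (Equiv.subtypeEquivRight fun U :
      Submodule F V => and_comm)]
    rw [my_card_subspaces_above m (n - 2) (by rw [hm]; omega)]
    have hquot : Module.finrank F (V ⧸ m) = n - 1 := by
      have := Submodule.finrank_quotient_add_finrank m
      rw [hV, hm] at this; omega
    rw [hm, my_card_subspaces_eq_gaussBinom hquot, show n - 2 - 1 = n - 3 by omega]
    rfl
  -- counting subspaces of dim n-2 above L
  have cardAboveL : Nat.card {U : Submodule F V //
      Module.finrank F U = n - 2 ∧ L ≤ U} = g2 := by
    rw [Nat.card_congr (Equiv.subtypeEquivRight fun U :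
      Submodule F V => and_comm)]
    rw [my_card_subspaces_above L (n - 2) (by rw [hL2]; omega)]
    have hquot : Module.finrank F (V ⧸ L) = n - 2 := by
      have := Submodule.finrank_quotient_add_finrank L
      rw [hV, hL2] at this; omega
    rw [hL2, my_card_subspaces_eq_gaussBinom hquot, show n - 2 - 2 = n - 4 by omega]
    rfl
  -- counting lines inside L
  have cardLinesL : Nat.card {m : Submodule F V //
      Module.finrank F m = 1 ∧ m ≤ L} = q + 1 := by
    have e : {m' : Submodule F L // Module.finrank F m' = 1} ≃
        {m : Submodule F V // Module.finrank F m = 1 ∧ m ≤ L} := by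
      refine ((Submodule.MapSubtype.orderIso L).toEquiv.subtypeEquiv
        (q := fun x : {m : Submodule F V // m ≤ L} => Module.finrank F x.1 = 1)
        (fun m' => ?_)).trans ((Equiv.subtypeSubtypeEquivSubtypeInter
          (fun m : Submodule F V => m ≤ L)
          (fun m => Module.finrank F m = 1)).trans
          (Equiv.subtypeEquivRight fun m => and_comm))
      show Module.finrank F m' = 1 ↔
        Module.finrank F (Submodule.map L.subtype m' : Submodule F V) = 1
      rw [Submodule.finrank_map_subtype_eq]
    have hmul := my_card_lines_mul (K := F) (M := L)
    rw [hF, hL2, Nat.card_congr e] at hmul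
    have hqq : (q + 1) * (q - 1) = q ^ 2 - 1 := by
      have h1 : 1 ≤ q := by omega
      have h2 : 1 ≤ q ^ 2 := Nat.one_le_pow _ _ (by omega)
      zify [h1, h2]; ring
    have := hmul.trans hqq.symm
    exact Nat.eq_of_mul_eq_mul_right (by omega) this
  -- the set of admissible lines (≠ u, v)
  have cardPair : Nat.card {x : {m : Submodule F V //
      Module.finrank F m = 1 ∧ m ≤ L} // x.1 = u ∨ x.1 = v} = 2 := by
    have hprop : ∀ w : Submodule F V, w = u ∨ w = v →
        (Module.finrank F w = 1 ∧ w ≤ L) := by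
      rintro w (rfl | rfl)
      exacts [⟨hu, le_sup_left⟩, ⟨hv, le_sup_right⟩]
    have e : {x : {m : Submodule F V // Module.finrank F m = 1 ∧ m ≤ L} //
        x.1 = u ∨ x.1 = v} ≃ ({u, v} : Set (Submodule F V)) :=
      ⟨fun x => ⟨x.1.1, by rcases x.2 with h | h <;> simp [h]⟩,
       fun y => ⟨⟨y.1, hprop y.1 ((Set.mem_insert_iff.1 y.2).imp id
         Set.mem_singleton_iff.1)⟩, (Set.mem_insert_iff.1 y.2).imp id
         Set.mem_singleton_iff.1⟩,
       fun x => by apply Subtype.ext; apply Subtype.ext; rfl,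
       fun y => by apply Subtype.ext; rfl⟩
    rw [Nat.card_congr e, Nat.card_coe_set_eq, Set.ncard_pair huv]
  have cardLines' : Nat.card {m : Submodule F V //
      (Module.finrank F m = 1 ∧ m ≤ L) ∧ m ≠ u ∧ m ≠ v} = q - 1 := by
    have e0 := Equiv.sumCompl (fun x : {m : Submodule F V //
      Module.finrank F m = 1 ∧ m ≤ L} => x.1 = u ∨ x.1 = v)
    have e2 : {x : {m : Submodule F V // Module.finrank F m = 1 ∧ m ≤ L} //
        ¬ (x.1 = u ∨ x.1 = v)} ≃ {m : Submodule F V //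
        (Module.finrank F m = 1 ∧ m ≤ L) ∧ m ≠ u ∧ m ≠ v} :=
      (Equiv.subtypeSubtypeEquivSubtypeInter
        (fun m : Submodule F V => Module.finrank F m = 1 ∧ m ≤ L)
        (fun m => ¬ (m = u ∨ m = v))).trans
        (Equiv.subtypeEquivRight fun m => by tauto)
    have := Nat.card_congr e0
    rw [Nat.card_sum, cardPair, Nat.card_congr e2, cardLinesL] at this
    omega
  -- the two parts
  have cardB : Nat.card {U : Submodule F V // Module.finrank F U = n - 2 ∧
      (Module.finrank F (U ⊓ L : Submodule F V) = 1 ∧ U ⊓ L ≠ u ∧ U ⊓ L ≠ v)} =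
      (q - 1) * (g1 - g2) := by
    set B := {U : Submodule F V // Module.finrank F U = n - 2 ∧
      (Module.finrank F (U ⊓ L : Submodule F V) = 1 ∧ U ⊓ L ≠ u ∧ U ⊓ L ≠ v)} with hBdef
    set Lines' := {m : Submodule F V //
      (Module.finrank F m = 1 ∧ m ≤ L) ∧ m ≠ u ∧ m ≠ v} with hLinesdef
    have ψdef : ∀ x : B, ((⟨x.1 ⊓ L, ⟨x.2.2.1, inf_le_right⟩,
        x.2.2.2.1, x.2.2.2.2⟩ : Lines') : Lines') = (⟨x.1 ⊓ L, ⟨x.2.2.1, inf_le_right⟩,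
        x.2.2.2.1, x.2.2.2.2⟩ : Lines') := fun _ => rfl
    have key := my_card_fiber_const (fun x : B => (⟨x.1 ⊓ L, ⟨x.2.2.1, inf_le_right⟩,
        x.2.2.2.1, x.2.2.2.2⟩ : Lines')) (g1 - g2) ?_
    · rw [key, cardLines']
    intro m
    have efib : {x : B // (⟨x.1 ⊓ L, ⟨x.2.2.1, inf_le_right⟩,
        x.2.2.2.1, x.2.2.2.2⟩ : Lines') = m} ≃
        {U : Submodule F V // Module.finrank F U = n - 2 ∧ U ⊓ L = m.1} :=
      ⟨fun x => ⟨x.1.1, x.1.2.1, congrArg Subtype.val x.2⟩,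
       fun U => ⟨⟨U.1, U.2.1, by
          rw [U.2.2]; exact ⟨m.2.1.1, m.2.2.1, m.2.2.2⟩⟩, Subtype.ext U.2.2⟩,
       fun x => by apply Subtype.ext; apply Subtype.ext; rfl,
       fun U => by apply Subtype.ext; rfl⟩
    rw [Nat.card_congr efib]
    have hcf := my_count_fiber (n := n) L m.1 hL2 m.2.1.1 m.2.1.2
    rw [cardAboveL, cardAbove m.1 m.2.1.1] at hcf
    omega
  -- g2 ≤ g1
  have hg2le : g2 ≤ g1 := by
    have hne : Nat.card {m : Submodule F V //
        (Module.finrank F m = 1 ∧ m ≤ L) ∧ m ≠ u ∧ m ≠ v} ≠ 0 := by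
      rw [cardLines']; omega
    obtain ⟨m⟩ := (Nat.card_ne_zero.1 hne).1
    have hcf := my_count_fiber (n := n) L m.1 hL2 m.2.1.1 m.2.1.2
    rw [cardAboveL, cardAbove m.1 m.2.1.1] at hcf
    omega
  -- translate the separation condition
  have step1 : Nat.card {U : Submodule F V // Module.finrank F U = n - 2 ∧
      ∀ W : Submodule F V, Module.finrank F W = n - 1 → U ≤ W →
        ((u ≤ W ∧ v ≤ W) ∨ (¬ u ≤ W ∧ ¬ v ≤ W))} =
      Nat.card {U : Submodule F V // Module.finrank F U = n - 2 ∧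
        (L ≤ U ∨ (Module.finrank F (U ⊓ L : Submodule F V) = 1 ∧
          U ⊓ L ≠ u ∧ U ⊓ L ≠ v))} := by
    refine Nat.card_congr (Equiv.subtypeEquivRight fun U => ?_)
    exact and_congr_right fun h => my_geom_iff hn hV u v hu hv huv U h
  -- split into the two parts
  have step2 : Nat.card {U : Submodule F V // Module.finrank F U = n - 2 ∧
      (L ≤ U ∨ (Module.finrank F (U ⊓ L : Submodule F V) = 1 ∧
        U ⊓ L ≠ u ∧ U ⊓ L ≠ v))} = g2 + (q - 1) * (g1 - g2) := by
    set P : Submodule F V → Prop := fun U => Module.finrank F U = n - 2 ∧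
      (L ≤ U ∨ (Module.finrank F (U ⊓ L : Submodule F V) = 1 ∧
        U ⊓ L ≠ u ∧ U ⊓ L ≠ v)) with hPdef
    have e0 := Equiv.sumCompl (fun x : {U : Submodule F V // P U} => L ≤ x.1)
    have e1 : {x : {U : Submodule F V // P U} // L ≤ x.1} ≃
        {U : Submodule F V // Module.finrank F U = n - 2 ∧ L ≤ U} :=
      (Equiv.subtypeSubtypeEquivSubtypeInter P (fun U => L ≤ U)).trans
        (Equiv.subtypeEquivRight fun U => by
          constructor
          · rintro ⟨⟨h1, _⟩, h2⟩; exact ⟨h1, h2⟩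
          · rintro ⟨h1, h2⟩; exact ⟨⟨h1, Or.inl h2⟩, h2⟩)
    have e2 : {x : {U : Submodule F V // P U} // ¬ L ≤ x.1} ≃
        {U : Submodule F V // Module.finrank F U = n - 2 ∧
          (Module.finrank F (U ⊓ L : Submodule F V) = 1 ∧ U ⊓ L ≠ u ∧ U ⊓ L ≠ v)} :=
      (Equiv.subtypeSubtypeEquivSubtypeInter P (fun U => ¬ L ≤ U)).trans
        (Equiv.subtypeEquivRight fun U => by
          constructor
          · rintro ⟨⟨h1, h2 | h2⟩, h3⟩
            · exact absurd h2 h3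
            · exact ⟨h1, h2⟩
          · rintro ⟨h1, h2⟩
            refine ⟨⟨h1, Or.inr h2⟩, fun h => ?_⟩
            rw [inf_eq_right.2 h] at h2
            rw [h2.1] at hL2
            omega)
    have := Nat.card_congr e0
    rw [Nat.card_sum, Nat.card_congr e1, Nat.card_congr e2, cardAboveL, cardB] at this
    exact this.symm
  rw [step1, step2]
  have h1q : 1 ≤ q := by omega
  push_cast [Nat.cast_sub hg2le, Nat.cast_sub h1q]
  ring
end

section
/- Let π be a finite projective plane of order q and let S be a minimal separating system for the points of π containing a point P. Then there exists exactly one point Q ≠ P such that S \ {P} does not separate the pair (P, Q); and for any line ℓ through P avoiding Q, the set (S \ {P}) ∪ {ℓ} is again a separating system of the same size. -/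
open Configuration

variable {P L : Type*} [Membership P L]

/-- The system of points `SP` and lines `SL` separates every pair of distinct points:
some line of `SL` contains exactly one of them, or some point of `SP` equals exactly
one of them. -/
def IsSepSystem (SP : Finset P) (SL : Finset L) : Prop :=
  ∀ X Y : P, X ≠ Y →
    (∃ R ∈ SP, (R = X ∧ R ≠ Y) ∨ (R ≠ X ∧ R = Y)) ∨
    (∃ ℓ ∈ SL, (X ∈ ℓ ∧ Y ∉ ℓ) ∨ (X ∉ ℓ ∧ Y ∈ ℓ))

/-- If `S` is a minimal separating system of a finite projective plane containing a point `p`,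
then there is exactly one point `Q ≠ p` not separated from `p` by `S \ {p}`, and replacing `p`
by any line through `p` avoiding `Q` yields a separating system of the same size. -/
theorem stmt_14 [ProjectivePlane P L] [Fintype P] [Fintype L] [DecidableEq P] [DecidableEq L]
    (SP : Finset P) (SL : Finset L) (hsep : IsSepSystem (L := L) SP SL)
    (hmin : ∀ SP' : Finset P, ∀ SL' : Finset L, SP' ⊆ SP → SL' ⊆ SL →
      (SP' ≠ SP ∨ SL' ≠ SL) → ¬ IsSepSystem (L := L) SP' SL')
    (p : P) (hp : p ∈ SP) :
    (∃! Q : P, Q ≠ p ∧ ¬ (∃ R ∈ SP.erase p, (R = p ∧ R ≠ Q) ∨ (R ≠ p ∧ R = Q)) ∧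
       ¬ (∃ ℓ ∈ SL, (p ∈ ℓ ∧ Q ∉ ℓ) ∨ (p ∉ ℓ ∧ Q ∈ ℓ))) ∧
    (∀ Q : P, (Q ≠ p ∧ ¬ (∃ R ∈ SP.erase p, (R = p ∧ R ≠ Q) ∨ (R ≠ p ∧ R = Q)) ∧
       ¬ (∃ ℓ ∈ SL, (p ∈ ℓ ∧ Q ∉ ℓ) ∨ (p ∉ ℓ ∧ Q ∈ ℓ))) →
      ∀ ℓ : L, p ∈ ℓ → Q ∉ ℓ →
        IsSepSystem (SP.erase p) (insert ℓ SL) ∧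
        (SP.erase p).card + (insert ℓ SL).card = SP.card + SL.card) := by
  classical
  -- any two "bad partners" of p coincide
  have huniq : ∀ Q1 Q2 : P,
      (Q1 ≠ p ∧ ¬ (∃ R ∈ SP.erase p, (R = p ∧ R ≠ Q1) ∨ (R ≠ p ∧ R = Q1)) ∧
        ¬ (∃ ℓ ∈ SL, (p ∈ ℓ ∧ Q1 ∉ ℓ) ∨ (p ∉ ℓ ∧ Q1 ∈ ℓ))) →
      (Q2 ≠ p ∧ ¬ (∃ R ∈ SP.erase p, (R = p ∧ R ≠ Q2) ∨ (R ≠ p ∧ R = Q2)) ∧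
        ¬ (∃ ℓ ∈ SL, (p ∈ ℓ ∧ Q2 ∉ ℓ) ∨ (p ∉ ℓ ∧ Q2 ∈ ℓ))) → Q1 = Q2 := by
    rintro Q1 Q2 ⟨h1p, h1R, h1L⟩ ⟨h2p, h2R, h2L⟩
    by_contra hne
    rcases hsep Q1 Q2 hne with ⟨R, hR, hc⟩ | ⟨ℓ, hℓ, hc⟩
    · rcases hc with ⟨rfl, _⟩ | ⟨_, rfl⟩
      · exact h1R ⟨R, Finset.mem_erase.2 ⟨h1p, hR⟩, Or.inr ⟨h1p, rfl⟩⟩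
      · exact h2R ⟨R, Finset.mem_erase.2 ⟨h2p, hR⟩, Or.inr ⟨h2p, rfl⟩⟩
    · rcases hc with ⟨h1in, h2nin⟩ | ⟨h1nin, h2in⟩
      · by_cases hpl : p ∈ ℓ
        · exact h2L ⟨ℓ, hℓ, Or.inl ⟨hpl, h2nin⟩⟩
        · exact h1L ⟨ℓ, hℓ, Or.inr ⟨hpl, h1in⟩⟩
      · by_cases hpl : p ∈ ℓ
        · exact h1L ⟨ℓ, hℓ, Or.inl ⟨hpl, h1nin⟩⟩
        · exact h2L ⟨ℓ, hℓ, Or.inr ⟨hpl, h2in⟩⟩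
  -- an unseparated pair (for the erased system) must involve p, and its other member is a bad partner
  have hpair : ∀ X Y : P, X ≠ Y →
      ¬ ((∃ R ∈ SP.erase p, (R = X ∧ R ≠ Y) ∨ (R ≠ X ∧ R = Y)) ∨
         (∃ ℓ ∈ SL, (X ∈ ℓ ∧ Y ∉ ℓ) ∨ (X ∉ ℓ ∧ Y ∈ ℓ))) →
      (X = p ∧ (Y ≠ p ∧ ¬ (∃ R ∈ SP.erase p, (R = p ∧ R ≠ Y) ∨ (R ≠ p ∧ R = Y)) ∧
        ¬ (∃ ℓ ∈ SL, (p ∈ ℓ ∧ Y ∉ ℓ) ∨ (p ∉ ℓ ∧ Y ∈ ℓ)))) ∨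
      (Y = p ∧ (X ≠ p ∧ ¬ (∃ R ∈ SP.erase p, (R = p ∧ R ≠ X) ∨ (R ≠ p ∧ R = X)) ∧
        ¬ (∃ ℓ ∈ SL, (p ∈ ℓ ∧ X ∉ ℓ) ∨ (p ∉ ℓ ∧ X ∈ ℓ)))) := by
    intro X Y hXY hns
    rw [not_or] at hns
    obtain ⟨hnR, hnL⟩ := hns
    rcases hsep X Y hXY with ⟨R, hR, hc⟩ | hl
    · have hRp : R = p := by
        by_contra h
        exact hnR ⟨R, Finset.mem_erase.2 ⟨h, hR⟩, hc⟩
      subst hRp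
      rcases hc with ⟨rfl, hne⟩ | ⟨hne, rfl⟩
      · exact Or.inl ⟨rfl, Ne.symm hne, hnR, hnL⟩
      · refine Or.inr ⟨rfl, Ne.symm hne, ?_, ?_⟩
        · rintro ⟨R, hR, hc⟩
          exact hnR ⟨R, hR, by tauto⟩
        · rintro ⟨ℓ, hℓ, hc⟩
          exact hnL ⟨ℓ, hℓ, by tauto⟩
    · exact absurd hl hnL
  -- existence
  have hne : SP.erase p ≠ SP := fun h => (Finset.erase_eq_self.1 h) hp
  have hnot := hmin (SP.erase p) SL (Finset.erase_subset p SP) (subset_refl SL) (Or.inl hne)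
  simp only [IsSepSystem, not_forall] at hnot
  obtain ⟨X, Y, hXY, hns⟩ := hnot
  have hQ0 := hpair X Y hXY hns
  constructor
  · rcases hQ0 with ⟨hXp, hcond⟩ | ⟨hYp, hcond⟩
    · exact ⟨Y, hcond, fun y hy => huniq y Y hy hcond⟩
    · exact ⟨X, hcond, fun y hy => huniq y X hy hcond⟩
  · rintro Q hQ ℓ hpl hQl
    have hℓSL : ℓ ∉ SL := fun h => hQ.2.2 ⟨ℓ, h, Or.inl ⟨hpl, hQl⟩⟩
    constructor
    · intro A B hAB
      by_cases hold : (∃ R ∈ SP.erase p, (R = A ∧ R ≠ B) ∨ (R ≠ A ∧ R = B)) ∨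
          (∃ m ∈ SL, (A ∈ m ∧ B ∉ m) ∨ (A ∉ m ∧ B ∈ m))
      · rcases hold with hA | ⟨m, hm, hc⟩
        · exact Or.inl hA
        · exact Or.inr ⟨m, Finset.mem_insert_of_mem hm, hc⟩
      · rcases hpair A B hAB hold with ⟨hAp, hcond⟩ | ⟨hBp, hcond⟩
        · have : B = Q := huniq B Q hcond hQ
          subst this; subst hAp
          exact Or.inr ⟨ℓ, Finset.mem_insert_self ℓ SL, Or.inl ⟨hpl, hQl⟩⟩
        · have : A = Q := huniq A Q hcond hQ
          subst this; subst hBp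
          exact Or.inr ⟨ℓ, Finset.mem_insert_self ℓ SL, Or.inr ⟨hQl, hpl⟩⟩
    · rw [Finset.card_erase_of_mem hp, Finset.card_insert_of_notMem hℓSL]
      have : 0 < SP.card := Finset.card_pos.2 ⟨p, hp⟩
      omega
end
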